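/- Let N ≥ 1 be a natural number, let K ≥ 2 be a natural number, and for each j ∈ Fin N let k'_j ∈ Fin K and p_j : Fin K → ℝ satisfy p_j(k) > 0 for all k, ∑ₖ p_j(k) = 1, and p_j(k'_j) < 1. Set μ_j = (1 − p_j(k'_j))/(K−1), δ_j(k) = p_j(k) − μ_j for k ≠ k'_j, and v_j = (1/(K−1))·∑_{k≠k'_j} δ_j(k)². Assume there exists ρ ∈ (0,1) with |δ_j(k)| ≤ ρ·μ_j for all j and all k ≠ k'_j. Then | (1/N)·∑_j (−log p_j(k'_j) − μ_j·∑_{k≠k'_j} log p_j(k)) − (1/N)·∑_j (−log p_j(k'_j) − (1−p_j(k'_j))·log μ_j + ((K−1)²/(2·(1−p_j(k'_j))))·v_j) | ≤ (1/N)·∑_j (K−1)^{3/2}·v_j^{3/2} / (3·(1−ρ)³·μ_j²). -/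

import Mathlib

open Finset

private lemma log_taylor_bound' {x : ℝ} (hx : |x| < 1) :
    |Real.log (1 + x) - x + x ^ 2 / 2| ≤ |x| ^ 3 / (3 * (1 - |x|)) := by
  have hx' : |(-x)| < 1 := by rwa [abs_neg]
  have h1 : HasSum (fun n : ℕ => (-x) ^ (n + 1) / (n + 1)) (-Real.log (1 - -x)) :=
    Real.hasSum_pow_div_log_of_abs_lt_one hx'
  set f : ℕ → ℝ := fun n => (-x) ^ (n + 1) / (n + 1) with hf
  have h2 : HasSum (fun n => f (n + 2)) (-Real.log (1 + x) - ∑ i ∈ range 2, f i) := by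
    rw [hasSum_nat_add_iff' 2]
    simpa using h1
  have hfr : ∑ i ∈ range 2, f i = -x + x ^ 2 / 2 := by
    simp [hf, Finset.sum_range_succ]
    ring
  have habs : ∀ n : ℕ, |f (n + 2)| ≤ |x| ^ 3 / 3 * |x| ^ n := by
    intro n
    have h3 : |f (n + 2)| = |x| ^ (n + 3) / ((n : ℝ) + 3) := by
      have hc : ((n + 2 : ℕ) : ℝ) + 1 = (n : ℝ) + 3 := by push_cast; ring
      rw [hf]
      show |(-x) ^ (n + 2 + 1) / (((n + 2 : ℕ) : ℝ) + 1)| = _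
      rw [abs_div, abs_pow, abs_neg, hc, abs_of_nonneg (by positivity : (0:ℝ) ≤ (n:ℝ) + 3)]
    rw [h3, div_le_iff₀ (by positivity)]
    have hxx : |x| ^ (n + 3) = |x| ^ 3 * |x| ^ n := by ring
    rw [hxx]
    have h4 : (3:ℝ) ≤ (n:ℝ) + 3 := by linarith [Nat.cast_nonneg (α := ℝ) n]
    calc |x| ^ 3 * |x| ^ n = |x| ^ 3 / 3 * |x| ^ n * 3 := by ring
    _ ≤ |x| ^ 3 / 3 * |x| ^ n * ((n:ℝ) + 3) := by
        apply mul_le_mul_of_nonneg_left h4 (by positivity)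
  have hg : HasSum (fun n : ℕ => |x| ^ 3 / 3 * |x| ^ n) (|x| ^ 3 / 3 * (1 - |x|)⁻¹) :=
    (hasSum_geometric_of_lt_one (abs_nonneg x) hx).mul_left _
  have hsummable : Summable fun n => |f (n + 2)| :=
    Summable.of_nonneg_of_le (fun n => abs_nonneg _) habs hg.summable
  have hT : |(-Real.log (1 + x) - ∑ i ∈ range 2, f i)| ≤ |x| ^ 3 / 3 * (1 - |x|)⁻¹ := by
    rw [← h2.tsum_eq]
    have h5 : |∑' n, f (n + 2)| ≤ ∑' n, |f (n + 2)| := by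
      have := norm_tsum_le_tsum_norm (f := fun n => f (n + 2))
        (by simpa [Real.norm_eq_abs] using hsummable)
      simpa [Real.norm_eq_abs] using this
    have h6 : ∑' n, |f (n + 2)| ≤ ∑' n, |x| ^ 3 / 3 * |x| ^ n :=
      Summable.tsum_le_tsum habs hsummable hg.summable
    calc |∑' n, f (n + 2)| ≤ ∑' n, |x| ^ 3 / 3 * |x| ^ n := le_trans h5 h6
    _ = |x| ^ 3 / 3 * (1 - |x|)⁻¹ := hg.tsum_eq
  rw [hfr] at hT
  have heq : |Real.log (1 + x) - x + x ^ 2 / 2| = |(-Real.log (1 + x) - (-x + x ^ 2 / 2))| := by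
    rw [← abs_neg]; congr 1; ring
  rw [heq]
  calc |(-Real.log (1 + x) - (-x + x ^ 2 / 2))| ≤ |x| ^ 3 / 3 * (1 - |x|)⁻¹ := hT
  _ = |x| ^ 3 / (3 * (1 - |x|)) := by
      rw [div_mul_eq_mul_div, mul_comm (3:ℝ), ← div_div]
      ring_nf

private lemma rpow_three_halves' {a : ℝ} (ha : 0 ≤ a) :
    a ^ ((3:ℝ)/2) = a * Real.sqrt a := by
  rcases ha.eq_or_lt with h | h
  · rw [← h, Real.zero_rpow (by norm_num : ((3:ℝ)/2) ≠ 0)]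
    simp
  · have : ((3:ℝ)/2) = 1 + 1/2 := by norm_num
    rw [this, Real.rpow_add h, Real.rpow_one, Real.sqrt_eq_rpow]

private lemma sum_abs_cube_le' {ι : Type*} (s : Finset ι) (t : ι → ℝ) :
    ∑ k ∈ s, |t k| ^ 3 ≤ (∑ k ∈ s, t k ^ 2) * Real.sqrt (∑ k ∈ s, t k ^ 2) := by
  have hS : (0:ℝ) ≤ ∑ k ∈ s, t k ^ 2 := Finset.sum_nonneg fun k _ => sq_nonneg _
  calc ∑ k ∈ s, |t k| ^ 3 = ∑ k ∈ s, t k ^ 2 * |t k| := by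
        refine Finset.sum_congr rfl fun k _ => ?_
        rw [← sq_abs]; ring
  _ ≤ ∑ k ∈ s, t k ^ 2 * Real.sqrt (∑ j ∈ s, t j ^ 2) := by
      refine Finset.sum_le_sum fun k hk => ?_
      refine mul_le_mul_of_nonneg_left ?_ (sq_nonneg _)
      rw [← Real.sqrt_sq_eq_abs]
      exact Real.sqrt_le_sqrt (Finset.single_le_sum (fun j _ => sq_nonneg (t j)) hk)
  _ = (∑ k ∈ s, t k ^ 2) * Real.sqrt (∑ k ∈ s, t k ^ 2) := by
      rw [← Finset.sum_mul]

set_option maxHeartbeats 1000000 in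
private lemma per_sample' (K : ℕ) (hK : 2 ≤ K) (k' : Fin K) (p : Fin K → ℝ)
    (hp : ∀ k, 0 < p k) (hsum : ∑ k, p k = 1) (hlt : p k' < 1)
    (ρ : ℝ) (hρ0 : 0 < ρ) (hρ1 : ρ < 1)
    (μ : ℝ) (hμ : μ = (1 - p k') / ((K : ℝ) - 1))
    (δ : Fin K → ℝ) (hδ : ∀ k, δ k = p k - μ)
    (v : ℝ) (hv : v = (1 / ((K : ℝ) - 1)) * ∑ k ∈ Finset.univ.erase k', δ k ^ 2)
    (hb : ∀ k ∈ Finset.univ.erase k', |δ k| ≤ ρ * μ) :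
    |(-Real.log (p k') - μ * ∑ k ∈ Finset.univ.erase k', Real.log (p k)) -
      (-Real.log (p k') - (1 - p k') * Real.log μ +
        (((K : ℝ) - 1) ^ 2 / (2 * (1 - p k'))) * v)| ≤
      ((K : ℝ) - 1) ^ ((3 : ℝ) / 2) * v ^ ((3 : ℝ) / 2) / (3 * (1 - ρ) ^ 3 * μ ^ 2) := by
  set Kr : ℝ := (K : ℝ) - 1 with hKr
  have hKr1 : (1:ℝ) ≤ Kr := by
    have : (2:ℝ) ≤ (K:ℝ) := by exact_mod_cast hK
    simp only [hKr]; linarith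
  have hKr0 : (0:ℝ) < Kr := lt_of_lt_of_le one_pos hKr1
  have h1p : (0:ℝ) < 1 - p k' := by linarith
  have hμpos : (0:ℝ) < μ := by rw [hμ]; positivity
  have hcard : (((Finset.univ.erase k').card : ℕ) : ℝ) = Kr := by
    rw [Finset.card_erase_of_mem (Finset.mem_univ _), Finset.card_univ, Fintype.card_fin,
      Nat.cast_sub (by omega : 1 ≤ K)]
    simp [hKr]
  have hsum' : ∑ k ∈ Finset.univ.erase k', p k = 1 - p k' := by
    have h := Finset.add_sum_erase Finset.univ p (Finset.mem_univ k')
    rw [hsum] at h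
    linarith
  have hKμ : Kr * μ = 1 - p k' := by
    rw [hμ]; field_simp
  have hδ0 : ∑ k ∈ Finset.univ.erase k', δ k = 0 := by
    have : ∑ k ∈ Finset.univ.erase k', δ k =
        (∑ k ∈ Finset.univ.erase k', p k) - ((Finset.univ.erase k').card : ℝ) * μ := by
      rw [Finset.sum_congr rfl fun k _ => hδ k, Finset.sum_sub_distrib, Finset.sum_const,
        nsmul_eq_mul]
    rw [this, hsum', hcard]
    linarith
  set S2 : ℝ := ∑ k ∈ Finset.univ.erase k', δ k ^ 2 with hS2def
  have hS2 : (0:ℝ) ≤ S2 := Finset.sum_nonneg fun k _ => sq_nonneg _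
  have hvnn : (0:ℝ) ≤ v := by rw [hv]; positivity
  have hlog : ∀ k ∈ Finset.univ.erase k',
      Real.log (p k) = Real.log μ + Real.log (1 + δ k / μ) := by
    intro k _
    have h1 : 1 + δ k / μ = p k / μ := by
      rw [hδ]; field_simp; ring
    rw [h1, Real.log_div (hp k).ne' hμpos.ne']
    ring
  have hsl : ∑ k ∈ Finset.univ.erase k', Real.log (p k) =
      Kr * Real.log μ + ∑ k ∈ Finset.univ.erase k', Real.log (1 + δ k / μ) := by
    rw [Finset.sum_congr rfl hlog, Finset.sum_add_distrib, Finset.sum_const, nsmul_eq_mul, hcard]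
  have hst : ∑ k ∈ Finset.univ.erase k', δ k / μ = 0 := by
    rw [← Finset.sum_div, hδ0, zero_div]
  have hst2 : ∑ k ∈ Finset.univ.erase k', (δ k / μ) ^ 2 = S2 / μ ^ 2 := by
    rw [Finset.sum_congr rfl fun k _ => div_pow (δ k) μ 2, ← Finset.sum_div]
  set Sq : ℝ := S2 / μ ^ 2 with hSqdef
  have hSq : (0:ℝ) ≤ Sq := by positivity
  have hE : (-Real.log (p k') - μ * ∑ k ∈ Finset.univ.erase k', Real.log (p k)) -
      (-Real.log (p k') - (1 - p k') * Real.log μ +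
        (Kr ^ 2 / (2 * (1 - p k'))) * v) =
      -μ * ∑ k ∈ Finset.univ.erase k',
        (Real.log (1 + δ k / μ) - δ k / μ + (δ k / μ) ^ 2 / 2) := by
    have hinner : ∑ k ∈ Finset.univ.erase k',
        (Real.log (1 + δ k / μ) - δ k / μ + (δ k / μ) ^ 2 / 2) =
        (∑ k ∈ Finset.univ.erase k', Real.log (1 + δ k / μ)) - 0 + (S2 / μ ^ 2) / 2 := by
      rw [Finset.sum_add_distrib, Finset.sum_sub_distrib, hst, ← Finset.sum_div, hst2]
    rw [hsl, hinner, hv, ← hKμ]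
    field_simp
    ring
  rw [hE]
  have hmain : ∀ k ∈ Finset.univ.erase k',
      |Real.log (1 + δ k / μ) - δ k / μ + (δ k / μ) ^ 2 / 2| ≤
        |δ k / μ| ^ 3 / (3 * (1 - ρ) ^ 3) := by
    intro k hk
    have htk : |δ k / μ| ≤ ρ := by
      rw [abs_div, abs_of_pos hμpos, div_le_iff₀ hμpos]
      exact hb k hk
    have h2 : |δ k / μ| < 1 := lt_of_le_of_lt htk hρ1
    refine le_trans (log_taylor_bound' h2) ?_
    have h01 : (0:ℝ) < 1 - ρ := by linarith
    have hr1 : (1 - ρ) ^ 3 ≤ 1 - ρ := by nlinarith [sq_nonneg (1 - ρ), sq_nonneg ρ]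
    have hd2 : 3 * (1 - ρ) ^ 3 ≤ 3 * (1 - |δ k / μ|) := by
      have hr2 : 1 - ρ ≤ 1 - |δ k / μ| := by linarith
      linarith
    have hd0 : (0:ℝ) < 3 * (1 - ρ) ^ 3 := by
      have h3 : (0:ℝ) < (1 - ρ) ^ 3 := pow_pos h01 3
      linarith
    exact div_le_div_of_nonneg_left (by positivity) hd0 hd2
  have habs1 : |(-μ * ∑ k ∈ Finset.univ.erase k',
      (Real.log (1 + δ k / μ) - δ k / μ + (δ k / μ) ^ 2 / 2))| ≤
      μ * ((Sq * Real.sqrt Sq) / (3 * (1 - ρ) ^ 3)) := by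
    rw [abs_mul, abs_neg, abs_of_pos hμpos]
    refine mul_le_mul_of_nonneg_left ?_ hμpos.le
    calc |∑ k ∈ Finset.univ.erase k',
          (Real.log (1 + δ k / μ) - δ k / μ + (δ k / μ) ^ 2 / 2)| ≤
        ∑ k ∈ Finset.univ.erase k',
          |Real.log (1 + δ k / μ) - δ k / μ + (δ k / μ) ^ 2 / 2| :=
      Finset.abs_sum_le_sum_abs _ _
    _ ≤ ∑ k ∈ Finset.univ.erase k', |δ k / μ| ^ 3 / (3 * (1 - ρ) ^ 3) :=
      Finset.sum_le_sum hmain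
    _ = (∑ k ∈ Finset.univ.erase k', |δ k / μ| ^ 3) / (3 * (1 - ρ) ^ 3) := by
      rw [Finset.sum_div]
    _ ≤ (Sq * Real.sqrt Sq) / (3 * (1 - ρ) ^ 3) := by
      have hc := sum_abs_cube_le' (Finset.univ.erase k') (fun k => δ k / μ)
      rw [hst2] at hc
      have h01 : (0:ℝ) < 1 - ρ := by linarith
      have hd0 : (0:ℝ) < 3 * (1 - ρ) ^ 3 := by
        have h3 : (0:ℝ) < (1 - ρ) ^ 3 := pow_pos h01 3
        linarith
      exact div_le_div_of_nonneg_right hc hd0.le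
  refine le_trans habs1 (le_of_eq ?_)
  have hKv : Kr * v = S2 := by
    rw [hv]; field_simp
  have hrp : Kr ^ ((3:ℝ)/2) * v ^ ((3:ℝ)/2) = S2 * Real.sqrt S2 := by
    rw [← Real.mul_rpow hKr0.le hvnn, hKv, rpow_three_halves' hS2]
  have hS2eq : S2 = μ ^ 2 * Sq := by
    rw [hSqdef]; field_simp
  have hsqrt : Real.sqrt S2 = μ * Real.sqrt Sq := by
    rw [hS2eq, Real.sqrt_mul (sq_nonneg μ), Real.sqrt_sq hμpos.le]
  have h01 : (0:ℝ) < 1 - ρ := by linarith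
  rw [hrp, hsqrt, hS2eq]
  field_simp [hμpos.ne', h01.ne']

/-- Batch-level decomposition: with adaptive smoothing `ε = μ_j` for each sample `j`,
the batch cross-entropy equals the batch decomposition up to a remainder bounded by
the average of the per-sample remainder bounds. -/
theorem batch_ce_decomposition (N : ℕ) (hN : 1 ≤ N) (K : ℕ) (hK : 2 ≤ K)
    (k' : Fin N → Fin K) (p : Fin N → Fin K → ℝ)
    (hp : ∀ j k, 0 < p j k) (hsum : ∀ j, ∑ k, p j k = 1)
    (hlt : ∀ j, p j (k' j) < 1)
    (ρ : ℝ) (hρ : ρ ∈ Set.Ioo (0 : ℝ) 1)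
    (μ : Fin N → ℝ) (hμ : ∀ j, μ j = (1 - p j (k' j)) / ((K : ℝ) - 1))
    (δ : Fin N → Fin K → ℝ) (hδ : ∀ j k, δ j k = p j k - μ j)
    (v : Fin N → ℝ)
    (hv : ∀ j, v j = (1 / ((K : ℝ) - 1)) * ∑ k ∈ Finset.univ.erase (k' j), δ j k ^ 2)
    (hbound : ∀ j, ∀ k ∈ Finset.univ.erase (k' j), |δ j k| ≤ ρ * μ j) :
    |(1 / (N : ℝ)) * ∑ j,
        (-Real.log (p j (k' j)) - μ j * ∑ k ∈ Finset.univ.erase (k' j), Real.log (p j k)) -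
      (1 / (N : ℝ)) * ∑ j,
        (-Real.log (p j (k' j)) - (1 - p j (k' j)) * Real.log (μ j) +
          (((K : ℝ) - 1) ^ 2 / (2 * (1 - p j (k' j)))) * v j)| ≤
      (1 / (N : ℝ)) * ∑ j,
        ((K : ℝ) - 1) ^ ((3 : ℝ) / 2) * v j ^ ((3 : ℝ) / 2) /
          (3 * (1 - ρ) ^ 3 * μ j ^ 2) := by
  obtain ⟨hρ0, hρ1⟩ := hρ
  rw [← mul_sub, ← Finset.sum_sub_distrib, abs_mul,
    abs_of_nonneg (by positivity : (0:ℝ) ≤ 1 / (N : ℝ))]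
  refine mul_le_mul_of_nonneg_left ?_ (by positivity)
  refine le_trans (Finset.abs_sum_le_sum_abs _ _) (Finset.sum_le_sum fun j _ => ?_)
  exact per_sample' K hK (k' j) (p j) (hp j) (hsum j) (hlt j) ρ hρ0 hρ1 (μ j) (hμ j)
    (δ j) (hδ j) (v j) (hv j) (hbound j)
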